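/- Let K be a field, a₁, …, a_N ∈ K pairwise distinct, b₁, …, b_M ∈ K, and define the 'difference alphabet' series Σ_{n∈ℤ} h_n t^n := Π_{k=1}^{M}(1 − t b_k) / Π_{j=1}^{N}(1 − t a_j) ∈ K[[t]] (so h_n = 0 for n < 0). Then for every m ≥ 0, Σ_{j=1}^{N} a_j^m · Π_{k=1}^{M}(a_j − b_k) / Π_{l ≠ j}(a_j − a_l) = h_{m − N + M + 1}. -/

import Mathlib

set_option maxHeartbeats 1000000

open PowerSeries Finset

open Polynomial in
private lemma lag_sum_coeff {K : Type*} [Field K] {N : ℕ} (a : Fin N → K)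
    (ha : Function.Injective a) (r : K[X]) (hr : r.degree < (N : WithBot ℕ)) :
    ∑ j : Fin N, r.eval (a j) / ∏ l ∈ (Finset.univ : Finset (Fin N)).erase j, (a j - a l)
      = r.coeff (N - 1) := by
  classical
  rcases Nat.eq_zero_or_pos N with hN | hN
  · subst hN
    have hr0 : r = 0 := by
      rw [← Polynomial.degree_eq_bot]
      exact Nat.WithBot.lt_zero_iff.mp (by simpa using hr)
    simp [hr0]
  have hinj : Set.InjOn a ↑(Finset.univ : Finset (Fin N)) := ha.injOn
  have hcard : #(Finset.univ : Finset (Fin N)) = N := by simp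
  have hre := Lagrange.eq_interpolate (v := a) (f := r) hinj (by rwa [hcard])
  have hbasis : ∀ j : Fin N, (Lagrange.basis Finset.univ a j).coeff (N - 1)
      = (∏ l ∈ (Finset.univ : Finset (Fin N)).erase j, (a j - a l))⁻¹ := by
    intro j
    have hcarde : #((Finset.univ : Finset (Fin N)).erase j) = N - 1 := by
      rw [Finset.card_erase_of_mem (Finset.mem_univ j), hcard]
    have hsplit : Lagrange.basis Finset.univ a j
        = Polynomial.C (∏ l ∈ (Finset.univ : Finset (Fin N)).erase j, (a j - a l)⁻¹) *
          ∏ l ∈ (Finset.univ : Finset (Fin N)).erase j,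
            (Polynomial.X - Polynomial.C (a l)) := by
      rw [Lagrange.basis, map_prod, ← Finset.prod_mul_distrib]
      rfl
    have hmonic : (∏ l ∈ (Finset.univ : Finset (Fin N)).erase j,
        (Polynomial.X - Polynomial.C (a l))).Monic :=
      monic_prod_of_monic _ _ fun l _ => monic_X_sub_C _
    have hdeg : (∏ l ∈ (Finset.univ : Finset (Fin N)).erase j,
        (Polynomial.X - Polynomial.C (a l))).natDegree = N - 1 := by
      rw [natDegree_prod _ _ fun l _ => X_sub_C_ne_zero (a l)]
      simp [natDegree_X_sub_C, hcarde]
    rw [hsplit, Polynomial.coeff_C_mul, ← hdeg, hmonic.coeff_natDegree, mul_one,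
      Finset.prod_inv_distrib]
  conv_rhs => rw [hre]
  rw [Lagrange.interpolate_apply, Polynomial.finset_sum_coeff]
  refine Finset.sum_congr rfl fun j _ => ?_
  rw [Polynomial.coeff_C_mul, hbasis j, div_eq_mul_inv]

open Polynomial in
private lemma reflect_shift {K : Type*} [Field K] (r : K[X]) (d : ℕ) (hd : r.natDegree ≤ d)
    (k : ℕ) : reflect (d + k) r = Polynomial.X ^ k * reflect d r := by
  induction k with
  | zero => simp
  | succ k ih =>
    have hstep : reflect (d + k + 1) r = Polynomial.X * reflect (d + k) r := by
      ext i
      rcases i with _ | j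
      · have h0 : r.coeff (d + k + 1) = 0 :=
          coeff_eq_zero_of_natDegree_lt (by omega)
        simp [coeff_reflect, revAt_le (Nat.zero_le _), h0]
      · rw [Polynomial.coeff_X_mul, coeff_reflect, coeff_reflect]
        by_cases hj : j ≤ d + k
        · rw [revAt_le (by omega : j + 1 ≤ d + k + 1), revAt_le hj]
          congr 1
          omega
        · rw [revAt_eq_self_of_lt (by omega), revAt_eq_self_of_lt (by omega),
            coeff_eq_zero_of_natDegree_lt (by omega), coeff_eq_zero_of_natDegree_lt (by omega)]
    rw [← add_assoc, hstep, ih, pow_succ, mul_comm (Polynomial.X ^ k) Polynomial.X, mul_assoc]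

open Polynomial in
private lemma reflect_X_sub_C' {K : Type*} [Field K] (c : K) :
    reflect 1 (Polynomial.X - Polynomial.C c) = 1 - Polynomial.C c * Polynomial.X := by
  ext i
  rcases i with _ | _ | i
  · simp [coeff_reflect]
  · simp [coeff_reflect]
  · rw [coeff_reflect, revAt_eq_self_of_lt (by omega)]
    have hd : (Polynomial.X - Polynomial.C c).natDegree = 1 := natDegree_X_sub_C c
    rw [coeff_eq_zero_of_natDegree_lt (by omega)]
    simp [Polynomial.coeff_one, Polynomial.coeff_X]

open Polynomial in
private lemma reflect_prod_coe {K : Type*} [Field K] :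
    ∀ (M : ℕ) (b : Fin M → K),
    ((reflect M (∏ k : Fin M, (Polynomial.X - Polynomial.C (b k))) : K[X]) : K⟦X⟧)
      = ∏ k : Fin M, (1 - PowerSeries.C (R := K) (b k) * PowerSeries.X) := by
  intro M
  induction M with
  | zero =>
    intro b
    simp
  | succ M ih =>
    intro b
    rw [Fin.prod_univ_succ, Fin.prod_univ_succ]
    have hd1 : (Polynomial.X - Polynomial.C (b 0)).natDegree ≤ 1 := (natDegree_X_sub_C _).le
    have hd2 : (∏ k : Fin M, (Polynomial.X - Polynomial.C (b k.succ))).natDegree ≤ M := by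
      have h := Polynomial.natDegree_prod_le (Finset.univ : Finset (Fin M))
        (fun k => Polynomial.X - Polynomial.C (b k.succ))
      have h2 : ∑ k : Fin M, (Polynomial.X - Polynomial.C (b k.succ)).natDegree = M := by
        simp [Polynomial.natDegree_X_sub_C]
      omega
    have hm := reflect_mul (Polynomial.X - Polynomial.C (b 0))
      (∏ k : Fin M, (Polynomial.X - Polynomial.C (b k.succ))) hd1 hd2
    rw [add_comm 1 M] at hm
    rw [hm, Polynomial.coe_mul, reflect_X_sub_C', ih fun k => b k.succ]
    congr 1
    rw [Polynomial.coe_sub, Polynomial.coe_one, Polynomial.coe_mul, Polynomial.coe_C,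
      Polynomial.coe_X]

theorem statement13 {K : Type*} [Field K] (N M : ℕ) (a : Fin N → K)
    (ha : Function.Injective a) (b : Fin M → K) (m : ℕ) :
    (∑ j : Fin N,
        a j ^ m * (∏ k : Fin M, (a j - b k)) /
          ∏ l ∈ (Finset.univ : Finset (Fin N)).erase j, (a j - a l)) =
      (if N ≤ m + M + 1 then
        PowerSeries.coeff (R := K) (m + M + 1 - N)
          ((∏ k : Fin M, (1 - PowerSeries.C (R := K) (b k) * PowerSeries.X)) *
            ∏ j : Fin N, (1 - PowerSeries.C (R := K) (a j) * PowerSeries.X)⁻¹)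
      else 0) := by
  classical
  -- polynomial side
  set B : Polynomial K := ∏ k : Fin M, (Polynomial.X - Polynomial.C (b k)) with hB
  set A : Polynomial K := ∏ j : Fin N, (Polynomial.X - Polynomial.C (a j)) with hA
  set F : Polynomial K := Polynomial.X ^ m * B with hFdef
  have hBmonic : B.Monic := Polynomial.monic_prod_of_monic _ _ fun k _ =>
    Polynomial.monic_X_sub_C _
  have hAmonic : A.Monic := Polynomial.monic_prod_of_monic _ _ fun j _ =>
    Polynomial.monic_X_sub_C _
  have hBdeg : B.natDegree = M := by
    rw [hB, Polynomial.natDegree_prod _ _ fun k _ => Polynomial.X_sub_C_ne_zero (b k)]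
    simp [Polynomial.natDegree_X_sub_C]
  have hAdeg : A.natDegree = N := by
    rw [hA, Polynomial.natDegree_prod _ _ fun j _ => Polynomial.X_sub_C_ne_zero (a j)]
    simp [Polynomial.natDegree_X_sub_C]
  have hFmonic : F.Monic := (Polynomial.monic_X_pow m).mul hBmonic
  have hFdeg : F.natDegree = m + M := by
    rw [hFdef, (Polynomial.monic_X_pow m).natDegree_mul hBmonic,
      Polynomial.natDegree_X_pow, hBdeg]
  set q : Polynomial K := F /ₘ A with hqdef
  set r : Polynomial K := F %ₘ A with hrdef
  have hFsplit : r + A * q = F := Polynomial.modByMonic_add_div F A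
  have hrdeg : r.degree < (N : WithBot ℕ) := by
    have h := Polynomial.degree_modByMonic_lt F hAmonic
    rwa [Polynomial.degree_eq_natDegree hAmonic.ne_zero, hAdeg] at h
  have hrnat : r.natDegree ≤ N - 1 := by
    by_cases hr0 : r = 0
    · simp [hr0]
    · have := (Polynomial.natDegree_lt_iff_degree_lt hr0).mpr hrdeg
      omega
  -- evaluations
  have heval : ∀ j, F.eval (a j) = a j ^ m * ∏ k : Fin M, (a j - b k) := by
    intro j
    simp [hFdef, hB, Polynomial.eval_prod]
  have hAeval : ∀ j, A.eval (a j) = 0 := by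
    intro j
    rw [hA, Polynomial.eval_prod]
    exact Finset.prod_eq_zero (Finset.mem_univ j) (by simp)
  have hreval : ∀ j, r.eval (a j) = F.eval (a j) := by
    intro j
    conv_rhs => rw [← hFsplit]
    simp [hAeval j]
  have hLHS : (∑ j : Fin N,
      a j ^ m * (∏ k : Fin M, (a j - b k)) /
        ∏ l ∈ (Finset.univ : Finset (Fin N)).erase j, (a j - a l)) = r.coeff (N - 1) := by
    rw [← lag_sum_coeff a ha r hrdeg]
    exact Finset.sum_congr rfl fun j _ => by rw [hreval j, heval j]
  rw [hLHS]
  -- power series side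
  set P : K⟦X⟧ := ∏ k : Fin M, (1 - PowerSeries.C (R := K) (b k) * PowerSeries.X) with hP
  set Qs : K⟦X⟧ := ∏ j : Fin N, (1 - PowerSeries.C (R := K) (a j) * PowerSeries.X) with hQs
  have hQc : PowerSeries.constantCoeff (R := K) Qs = 1 := by
    rw [hQs, map_prod]
    exact Finset.prod_eq_one fun j _ => by simp
  have hPc : PowerSeries.constantCoeff (R := K) P = 1 := by
    rw [hP, map_prod]
    exact Finset.prod_eq_one fun k _ => by simp
  have hQne : PowerSeries.constantCoeff (R := K) Qs ≠ 0 := by rw [hQc]; exact one_ne_zero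
  have hinvprod : (∏ j : Fin N, (1 - PowerSeries.C (R := K) (a j) * PowerSeries.X)⁻¹) = Qs⁻¹ := by
    rw [PowerSeries.eq_inv_iff_mul_eq_one hQne, hQs, ← Finset.prod_mul_distrib]
    exact Finset.prod_eq_one fun j _ => PowerSeries.inv_mul_cancel _ (by simp)
  rw [hinvprod]
  have hXm : Polynomial.reflect m (Polynomial.X ^ m : Polynomial K) = 1 := by
    rw [Polynomial.reflect_monomial, Polynomial.revAt_le le_rfl, Nat.sub_self, pow_zero]
  have hPF : ((Polynomial.reflect (m + M) F) : K⟦X⟧) = P := by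
    have hm := Polynomial.reflect_mul (Polynomial.X ^ m) B
      (Polynomial.natDegree_X_pow m).le hBdeg.le
    rw [hFdef, hm, hXm, one_mul, hB, reflect_prod_coe M b, hP]
  by_cases hcase : N ≤ m + M + 1
  · rw [if_pos hcase]
    by_cases hbig : N ≤ m + M
    · have hqnat : q.natDegree ≤ m + M - N := by
        rw [hqdef, Polynomial.natDegree_divByMonic F hAmonic, hFdeg, hAdeg]
      have hrshift : Polynomial.reflect (m + M) r
          = Polynomial.X ^ (m + M + 1 - N) * Polynomial.reflect (N - 1) r := by
        rcases Nat.eq_zero_or_pos N with h0 | h0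
        · have hr0 : r = 0 := by
            rw [← Polynomial.degree_eq_bot]
            exact Nat.WithBot.lt_zero_iff.mp (by simpa [h0] using hrdeg)
          simp [hr0]
        · have he : (N - 1) + (m + M + 1 - N) = m + M := by omega
          have h2 := reflect_shift r (N - 1) hrnat (m + M + 1 - N)
          rwa [he] at h2
      have hArefl : ((Polynomial.reflect N A) : K⟦X⟧) = Qs := by
        rw [hA, reflect_prod_coe N a, hQs]
      have hqrefl : Polynomial.reflect (m + M) (A * q)
          = Polynomial.reflect N A * Polynomial.reflect (m + M - N) q := by
        have h := Polynomial.reflect_mul A q hAdeg.le hqnat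
        rw [show N + (m + M - N) = m + M from by omega] at h
        exact h
      have hkey : P = Qs * ((Polynomial.reflect (m + M - N) q) : K⟦X⟧)
          + (PowerSeries.X : K⟦X⟧) ^ (m + M + 1 - N)
            * ((Polynomial.reflect (N - 1) r) : K⟦X⟧) := by
        rw [← hPF]
        conv_lhs => rw [← hFsplit]
        rw [Polynomial.reflect_add, hqrefl, hrshift, Polynomial.coe_add, Polynomial.coe_mul,
          Polynomial.coe_mul, Polynomial.coe_pow, Polynomial.coe_X, hArefl]
        ring
      rw [hkey]
      have hQinv : Qs * Qs⁻¹ = 1 := PowerSeries.mul_inv_cancel _ hQne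
      have hexp : (Qs * ((Polynomial.reflect (m + M - N) q) : K⟦X⟧)
          + (PowerSeries.X : K⟦X⟧) ^ (m + M + 1 - N)
            * ((Polynomial.reflect (N - 1) r) : K⟦X⟧)) * Qs⁻¹
          = ((Polynomial.reflect (m + M - N) q) : K⟦X⟧)
            + (PowerSeries.X : K⟦X⟧) ^ (m + M + 1 - N)
              * (((Polynomial.reflect (N - 1) r) : K⟦X⟧) * Qs⁻¹) := by
        have h1 : Qs * ((Polynomial.reflect (m + M - N) q) : K⟦X⟧) * Qs⁻¹
            = ((Polynomial.reflect (m + M - N) q) : K⟦X⟧) * (Qs * Qs⁻¹) := by ring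
        rw [add_mul, h1, hQinv, mul_one]
        ring
      rw [hexp, map_add]
      have hq0 : (PowerSeries.coeff (R := K) (m + M + 1 - N))
          ((Polynomial.reflect (m + M - N) q : K⟦X⟧)) = 0 := by
        rw [Polynomial.coeff_coe, Polynomial.coeff_reflect,
          Polynomial.revAt_eq_self_of_lt (by omega)]
        exact Polynomial.coeff_eq_zero_of_natDegree_lt (by omega)
      have hx : (PowerSeries.coeff (R := K) (m + M + 1 - N))
          ((PowerSeries.X : K⟦X⟧) ^ (m + M + 1 - N)
            * (((Polynomial.reflect (N - 1) r) : K⟦X⟧) * Qs⁻¹))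
          = PowerSeries.coeff (R := K) 0 (((Polynomial.reflect (N - 1) r) : K⟦X⟧) * Qs⁻¹) := by
        simpa using PowerSeries.coeff_X_pow_mul
          (((Polynomial.reflect (N - 1) r) : K⟦X⟧) * Qs⁻¹) (m + M + 1 - N) 0
      rw [hq0, hx, zero_add]
      rw [PowerSeries.coeff_zero_eq_constantCoeff_apply]
      rw [map_mul]
      rw [PowerSeries.constantCoeff_inv, hQc, inv_one, mul_one]
      rw [← PowerSeries.coeff_zero_eq_constantCoeff_apply, Polynomial.coeff_coe]
      rw [Polynomial.coeff_reflect, Polynomial.revAt_le (Nat.zero_le _), Nat.sub_zero]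
    · have hdegFA : F.degree < A.degree := by
        rw [Polynomial.degree_eq_natDegree hAmonic.ne_zero, hAdeg,
          Polynomial.degree_eq_natDegree hFmonic.ne_zero, hFdeg]
        exact_mod_cast (by omega : m + M < N)
      have hr0 : r = F := (Polynomial.modByMonic_eq_self_iff hAmonic).mpr hdegFA
      have hn : m + M + 1 - N = 0 := by omega
      rw [hn, PowerSeries.coeff_zero_eq_constantCoeff_apply, map_mul, hPc,
        PowerSeries.constantCoeff_inv, hQc, inv_one, one_mul, hr0,
        show N - 1 = m + M from by omega, ← hFdeg]
      exact hFmonic.coeff_natDegree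
  · rw [if_neg hcase]
    have hdegFA : F.degree < A.degree := by
      rw [Polynomial.degree_eq_natDegree hAmonic.ne_zero, hAdeg,
        Polynomial.degree_eq_natDegree hFmonic.ne_zero, hFdeg]
      exact_mod_cast (by omega : m + M < N)
    have hr0 : r = F := (Polynomial.modByMonic_eq_self_iff hAmonic).mpr hdegFA
    rw [hr0]
    exact Polynomial.coeff_eq_zero_of_natDegree_lt (by omega)
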